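/- Let v ∈ V_l, μ ∈ Φ(v), i ∈ ℤ/eℤ and r ∈ ℤ_{>0}. Then S_{r,i}(f_v(μ)) equals the number of addable i-nodes (a,b,c) of μ with b − 1 ≥ r minus the number of removable i-nodes (a,b,c) of μ with b ≥ r. -/

import Mathlib

/-- An `l`-multipartition: `part c a` is the `(a+1)`-st part (0-based row index `a`)
of the partition `λ^{(c)}`. Parts are weakly decreasing and eventually zero. -/
structure MultiPartition (l : ℕ) where
  part : Fin l → ℕ → ℕ
  antitone : ∀ c : Fin l, ∀ a b : ℕ, a ≤ b → part c b ≤ part c a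
  finite : ∃ N : ℕ, ∀ c : Fin l, ∀ a : ℕ, N ≤ a → part c a = 0

namespace MultiPartition

variable {l : ℕ}

/-- A node is a triple `(a, b, c)`: row `a`, column `b` (both 0-based), component `c`.
The node `(a, b, c)` belongs to `lam` iff `b < lam.part c a`. -/
def content (v : Fin l → ℤ) (γ : ℕ × ℕ × Fin l) : ℤ :=
  (γ.2.1 : ℤ) - (γ.1 : ℤ) + v γ.2.2

def res (e : ℕ) (v : Fin l → ℤ) (γ : ℕ × ℕ × Fin l) : ZMod e :=
  ((content v γ : ℤ) : ZMod e)

/-- The total order `≺_v` on `i`-nodes. -/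
def prec (v : Fin l → ℤ) (γ δ : ℕ × ℕ × Fin l) : Prop :=
  content v γ < content v δ ∨ (content v γ = content v δ ∧ δ.2.2 < γ.2.2)

/-- `γ = (a,b,c)` is a removable node of `lam`: it is the last node of its row
(`lam.part c a = b + 1`) and removing it leaves a multipartition. -/
def Removable (lam : MultiPartition l) (γ : ℕ × ℕ × Fin l) : Prop :=
  lam.part γ.2.2 γ.1 = γ.2.1 + 1 ∧ lam.part γ.2.2 (γ.1 + 1) ≤ γ.2.1

/-- `γ = (a,b,c)` is an addable node of `lam`: it sits just beyond its row
(`lam.part c a = b`) and adding it yields a multipartition. -/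
def Addable (lam : MultiPartition l) (γ : ℕ × ℕ × Fin l) : Prop :=
  lam.part γ.2.2 γ.1 = γ.2.1 ∧ (γ.1 = 0 ∨ γ.2.1 < lam.part γ.2.2 (γ.1 - 1))

/-- The set `V_l` of multicharges: `v_0 ≤ v_1 ≤ ⋯ ≤ v_{l-1} < v_0 + e`. -/
def memV (e : ℕ) [NeZero l] (v : Fin l → ℤ) : Prop :=
  Monotone v ∧ ∀ c : Fin l, v c < v 0 + e

/-- FLOTW condition for an `l`-partition with multicharge `v ∈ V_l`. -/
def IsFLOTW (e : ℕ) [NeZero l] (v : Fin l → ℤ) (lam : MultiPartition l) : Prop :=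
  (∀ c : Fin l, ∀ h : (c : ℕ) + 1 < l, ∀ a : ℕ,
      lam.part ⟨(c : ℕ) + 1, h⟩ (a + (v ⟨(c : ℕ) + 1, h⟩ - v c).toNat) ≤ lam.part c a)
  ∧ (∀ a : ℕ,
      lam.part 0 (a + ((e : ℤ) + v 0 -
          v ⟨l - 1, Nat.sub_lt (Nat.pos_of_ne_zero (NeZero.ne l)) Nat.one_pos⟩).toNat)
        ≤ lam.part ⟨l - 1, Nat.sub_lt (Nat.pos_of_ne_zero (NeZero.ne l)) Nat.one_pos⟩ a)
  ∧ ∀ k : ℕ, 1 ≤ k → ∃ i : ZMod e, ∀ c : Fin l, ∀ a : ℕ,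
      lam.part c a = k → (((k : ℤ) - ((a : ℤ) + 1) + v c : ℤ) : ZMod e) ≠ i

end MultiPartition

/-- A (ℤ/eℤ-valued) multisegment, recorded by multiplicities: `m len j` is the
multiplicity of the segment `(len; j]` of length `len ≥ 1` and tail `j`. -/
structure Multisegment (e : ℕ) where
  m : ℕ → ZMod e → ℕ
  zero : ∀ j : ZMod e, m 0 j = 0
  finite : ∃ N : ℕ, ∀ len : ℕ, N ≤ len → ∀ j : ZMod e, m len j = 0

namespace Multisegment

variable {e : ℕ}

/-- `S_{l,i}(ψ) = Σ_{k ≥ l} (m_{(k; i-1]}(ψ) − m_{(k; i]}(ψ))`. -/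
noncomputable def Sval (ψ : Multisegment e) (i : ZMod e) (len : ℕ) : ℤ :=
  ∑ᶠ k : ℕ, if len ≤ k then ((ψ.m k (i - 1) : ℤ) - (ψ.m k i : ℤ)) else 0

/-- `min_{l > 0} S_{l,i}(ψ)`. -/
noncomputable def minS (ψ : Multisegment e) (i : ZMod e) : ℤ :=
  sInf {x : ℤ | ∃ len : ℕ, 1 ≤ len ∧ Sval ψ i len = x}

/-- The smallest `l > 0` attaining `min_{l > 0} S_{l,i}(ψ)`. -/
noncomputable def ellF (ψ : Multisegment e) (i : ZMod e) : ℕ :=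
  sInf {len : ℕ | 1 ≤ len ∧ Sval ψ i len = minS ψ i}

/-- The largest `l > 0` attaining `min_{l > 0} S_{l,i}(ψ)`. -/
noncomputable def ellE (ψ : Multisegment e) (i : ZMod e) : ℕ :=
  sSup {len : ℕ | 1 ≤ len ∧ Sval ψ i len = minS ψ i}

/-- The Kashiwara operator `f̃_i` on multisegments: with `ℓ₀ = ellF ψ i`, add `(1; i]`
if `ℓ₀ = 1`, and replace one copy of `(ℓ₀ − 1; i − 1]` by `(ℓ₀; i]` if `ℓ₀ > 1`. -/
noncomputable def ftM (ψ : Multisegment e) (i : ZMod e) : Multisegment e where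
  m := fun len j =>
    if len = ellF ψ i ∧ 1 ≤ len ∧ j = i then ψ.m len j + 1
    else if len + 1 = ellF ψ i ∧ 1 ≤ len ∧ j = i - 1 then ψ.m len j - 1
    else ψ.m len j
  zero := by intro j; simp [ψ.zero j]
  finite := by
    obtain ⟨N, hN⟩ := ψ.finite
    refine ⟨max N (ellF ψ i + 1), fun len hlen j => ?_⟩
    have h1 : N ≤ len := le_trans (le_max_left _ _) hlen
    have h2 : ellF ψ i + 1 ≤ len := le_trans (le_max_right _ _) hlen
    have hne1 : ¬(len = ellF ψ i ∧ 1 ≤ len ∧ j = i) := by rintro ⟨h, -⟩; omega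
    have hne2 : ¬(len + 1 = ellF ψ i ∧ 1 ≤ len ∧ j = i - 1) := by rintro ⟨h, -⟩; omega
    simp [hne1, hne2, hN len h1 j]

/-- The Kashiwara operator `ẽ_i` on multisegments: `none` if `min_{l>0} S_{l,i}(ψ) = 0`;
otherwise, with `ℓ₀ = ellE ψ i`, replace one copy of `(ℓ₀; i]` by `(ℓ₀ − 1; i − 1]`
(removing it when `ℓ₀ = 1`). -/
noncomputable def etM (ψ : Multisegment e) (i : ZMod e) : Option (Multisegment e) :=
  if minS ψ i = 0 then none
  else some
    { m := fun len j =>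
        if len = ellE ψ i ∧ 1 ≤ len ∧ j = i then ψ.m len j - 1
        else if len + 1 = ellE ψ i ∧ 1 ≤ len ∧ j = i - 1 then ψ.m len j + 1
        else ψ.m len j
      zero := by intro j; simp [ψ.zero j]
      finite := by
        obtain ⟨N, hN⟩ := ψ.finite
        refine ⟨max N (ellE ψ i + 1), fun len hlen j => ?_⟩
        have h1 : N ≤ len := le_trans (le_max_left _ _) hlen
        have h2 : ellE ψ i + 1 ≤ len := le_trans (le_max_right _ _) hlen
        have hne1 : ¬(len = ellE ψ i ∧ 1 ≤ len ∧ j = i) := by rintro ⟨h, -⟩; omega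
        have hne2 : ¬(len + 1 = ellE ψ i ∧ 1 ≤ len ∧ j = i - 1) := by rintro ⟨h, -⟩; omega
        simp [hne1, hne2, hN len h1 j] }

/-- Aperiodicity: for every length `l ≥ 1` there is a head `h ∈ ℤ/eℤ` such that the
segment of length `l` and head `h` (i.e. tail `h + l − 1`) does not occur in `ψ`. -/
def Aperiodic (ψ : Multisegment e) : Prop :=
  ∀ len : ℕ, 1 ≤ len → ∃ h : ZMod e, ψ.m len (h + (len : ZMod e) - 1) = 0

end Multisegment

/-- The map `f_v` sending an `l`-partition to the multisegment which contains, for each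
nonzero part `λ^{(c)}_j`, one segment of length `λ^{(c)}_j` and tail
`λ^{(c)}_j − j + v_c (mod e)`. -/
noncomputable def fmap (e : ℕ) {l : ℕ} (v : Fin l → ℤ) (lam : MultiPartition l) :
    Multisegment e where
  m := fun len j =>
    if 1 ≤ len then
      Set.ncard {p : Fin l × ℕ | lam.part p.1 p.2 = len ∧
        (((len : ℤ) - ((p.2 : ℤ) + 1) + v p.1 : ℤ) : ZMod e) = j}
    else 0
  zero := by intro j; simp
  finite := by
    classical
    refine ⟨(Finset.univ.sup fun c : Fin l => lam.part c 0) + 1, fun len hlen j => ?_⟩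
    show (if 1 ≤ len then
      Set.ncard {p : Fin l × ℕ | lam.part p.1 p.2 = len ∧
        (((len : ℤ) - ((p.2 : ℤ) + 1) + v p.1 : ℤ) : ZMod e) = j}
    else 0) = 0
    rw [if_pos (le_trans (Nat.le_add_left 1 _) hlen)]
    convert Set.ncard_empty (Fin l × ℕ)
    ext p
    simp only [Set.mem_setOf_eq, Set.mem_empty_iff_false, iff_false, not_and]
    intro hp
    exfalso
    have h1 : lam.part p.1 p.2 ≤ lam.part p.1 0 := lam.antitone p.1 0 p.2 (Nat.zero_le _)
    have h2 : lam.part p.1 0 ≤ Finset.univ.sup fun c : Fin l => lam.part c 0 :=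
      Finset.le_sup (f := fun c : Fin l => lam.part c 0) (Finset.mem_univ p.1)
    omega

open MultiPartition Multisegment in
/-- Statement 7: for a FLOTW `l`-partition `μ`, `S_{r,i}(f_v(μ))` equals the number of
addable `i`-nodes `(a,b,c)` of `μ` with `b − 1 ≥ r` minus the number of removable
`i`-nodes `(a,b,c)` of `μ` with `b ≥ r` (columns `b` here being 0-based, so the two
conditions read `r ≤ b` and `r ≤ b + 1` respectively). -/
theorem Sval_fmap_eq_node_count (e l : ℕ) [NeZero l] (he : 2 ≤ e)
    (v : Fin l → ℤ) (hv : memV e v)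
    (mu : MultiPartition l) (hmu : IsFLOTW e v mu) (i : ZMod e) (r : ℕ) (hr : 1 ≤ r) :
    Sval (fmap e v mu) i r =
      (Set.ncard {γ : ℕ × ℕ × Fin l |
          Addable mu γ ∧ res e v γ = i ∧ r ≤ γ.2.1} : ℤ)
        - (Set.ncard {γ : ℕ × ℕ × Fin l |
          Removable mu γ ∧ res e v γ = i ∧ r ≤ γ.2.1 + 1} : ℤ) := by
  classical
  obtain ⟨N, hN⟩ := mu.finite
  set M : ℕ := (Finset.univ.sup fun c : Fin l => mu.part c 0) + 1 with hM
  have hPM : ∀ c : Fin l, ∀ a : ℕ, mu.part c a < M := by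
    intro c a
    have h1 := mu.antitone c 0 a (Nat.zero_le _)
    have h2 : mu.part c 0 ≤ Finset.univ.sup fun c : Fin l => mu.part c 0 :=
      Finset.le_sup (f := fun c : Fin l => mu.part c 0) (Finset.mem_univ c)
    omega
  have hrow : ∀ c : Fin l, ∀ a : ℕ, 1 ≤ mu.part c a → a < N := by
    intro c a h
    by_contra hc
    push_neg at hc
    have := hN c a hc
    omega
  set T : Fin l × ℕ → ZMod e :=
    fun p => (((mu.part p.1 p.2 : ℤ) - ((p.2 : ℤ) + 1) + v p.1 : ℤ) : ZMod e) with hT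
  set D : Finset (Fin l × ℕ) := Finset.univ ×ˢ Finset.range N with hD
  have hmemD : ∀ p : Fin l × ℕ, 1 ≤ mu.part p.1 p.2 → p ∈ D := by
    intro p hp
    simp only [hD, Finset.mem_product, Finset.mem_univ, Finset.mem_range, true_and]
    exact hrow p.1 p.2 hp
  set A : Finset (Fin l × ℕ) :=
    D.filter (fun p => r ≤ mu.part p.1 p.2 ∧ T p = i - 1) with hA
  set R : Finset (Fin l × ℕ) :=
    D.filter (fun p => r ≤ mu.part p.1 p.2 ∧ T p = i) with hR
  -- the multiplicity as a finset cardinality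
  have hm : ∀ k : ℕ, 1 ≤ k → ∀ j : ZMod e, (fmap e v mu).m k j =
      (D.filter fun p => mu.part p.1 p.2 = k ∧ T p = j).card := by
    intro k hk j
    show (if 1 ≤ k then Set.ncard {p : Fin l × ℕ | mu.part p.1 p.2 = k ∧
        (((k : ℤ) - ((p.2 : ℤ) + 1) + v p.1 : ℤ) : ZMod e) = j} else 0) = _
    rw [if_pos hk, ← Set.ncard_coe_finset]
    congr 1
    ext p
    simp only [Set.mem_setOf_eq, Finset.coe_filter, Finset.mem_coe]
    constructor
    · rintro ⟨h1, h2⟩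
      refine ⟨hmemD p (by omega), h1, ?_⟩
      simp only [hT]
      rw [h1]
      exact h2
    · rintro ⟨hd, h1, h2⟩
      refine ⟨h1, ?_⟩
      simp only [hT] at h2
      rw [h1] at h2
      exact h2
  -- Sval = #A - #R
  have hAcard : A.card = ∑ k ∈ Finset.range M,
      (A.filter fun p => mu.part p.1 p.2 = k).card :=
    Finset.card_eq_sum_card_fiberwise (fun p _ => Finset.mem_range.mpr (hPM p.1 p.2))
  have hRcard : R.card = ∑ k ∈ Finset.range M,
      (R.filter fun p => mu.part p.1 p.2 = k).card :=
    Finset.card_eq_sum_card_fiberwise (fun p _ => Finset.mem_range.mpr (hPM p.1 p.2))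
  have hfiberA : ∀ k : ℕ, r ≤ k →
      (A.filter fun p => mu.part p.1 p.2 = k) =
        (D.filter fun p => mu.part p.1 p.2 = k ∧ T p = i - 1) := by
    intro k hk
    ext p
    simp only [hA, Finset.mem_filter, Finset.filter_filter]
    constructor
    · rintro ⟨hd, ⟨h1, h2⟩, h3⟩; exact ⟨hd, h3, h2⟩
    · rintro ⟨hd, h1, h2⟩; exact ⟨hd, ⟨by omega, h2⟩, h1⟩
  have hfiberR : ∀ k : ℕ, r ≤ k →
      (R.filter fun p => mu.part p.1 p.2 = k) =
        (D.filter fun p => mu.part p.1 p.2 = k ∧ T p = i) := by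
    intro k hk
    ext p
    simp only [hR, Finset.mem_filter, Finset.filter_filter]
    constructor
    · rintro ⟨hd, ⟨h1, h2⟩, h3⟩; exact ⟨hd, h3, h2⟩
    · rintro ⟨hd, h1, h2⟩; exact ⟨hd, ⟨by omega, h2⟩, h1⟩
  have hfiberA0 : ∀ k : ℕ, ¬ r ≤ k →
      (A.filter fun p => mu.part p.1 p.2 = k) = ∅ := by
    intro k hk
    rw [Finset.filter_eq_empty_iff]
    intro p hp
    simp only [hA, Finset.mem_filter] at hp
    omega
  have hfiberR0 : ∀ k : ℕ, ¬ r ≤ k →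
      (R.filter fun p => mu.part p.1 p.2 = k) = ∅ := by
    intro k hk
    rw [Finset.filter_eq_empty_iff]
    intro p hp
    simp only [hR, Finset.mem_filter] at hp
    omega
  have hsval : Sval (fmap e v mu) i r = (A.card : ℤ) - (R.card : ℤ) := by
    have hsum : Sval (fmap e v mu) i r =
        ∑ k ∈ Finset.range M, (if r ≤ k then
          ((fmap e v mu).m k (i - 1) : ℤ) - ((fmap e v mu).m k i : ℤ) else 0) := by
      apply finsum_eq_sum_of_support_subset
      intro k hk
      simp only [Function.mem_support, Finset.coe_range, Set.mem_Iio] at hk ⊢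
      by_contra h
      push_neg at h
      have hk1 : 1 ≤ k := by omega
      have hz : ∀ j : ZMod e, ((fmap e v mu).m k j : ℤ) = 0 := by
        intro j
        rw [hm k hk1 j]
        norm_num
        intro a b _ h1 _
        have := hPM a b
        omega
      apply hk
      rw [hz, hz]
      simp
    rw [hsum, hAcard, hRcard]
    push_cast
    rw [← Finset.sum_sub_distrib]
    apply Finset.sum_congr rfl
    intro k hk
    by_cases hrk : r ≤ k
    · rw [if_pos hrk, hfiberA k hrk, hfiberR k hrk,
        hm k (le_trans hr hrk) (i - 1), hm k (le_trans hr hrk) i]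
    · rw [if_neg hrk, hfiberA0 k hrk, hfiberR0 k hrk]
      simp
  -- top / bottom splits
  set Atop : Finset (Fin l × ℕ) :=
    A.filter (fun p => p.2 = 0 ∨ mu.part p.1 p.2 < mu.part p.1 (p.2 - 1)) with hAtop
  set Rbot : Finset (Fin l × ℕ) :=
    R.filter (fun p => mu.part p.1 (p.2 + 1) < mu.part p.1 p.2) with hRbot
  -- addable set = image of Atop
  have hAddSet : {γ : ℕ × ℕ × Fin l | Addable mu γ ∧ res e v γ = i ∧ r ≤ γ.2.1} =
      ↑(Atop.image fun p => (p.2, mu.part p.1 p.2, p.1)) := by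
    ext γ
    obtain ⟨a, b, c⟩ := γ
    simp only [Set.mem_setOf_eq, Finset.coe_image, Set.mem_image, Finset.mem_coe]
    constructor
    · rintro ⟨⟨hadd1, hadd2⟩, hres, hrb⟩
      simp only at hadd1 hadd2 hrb
      have hres' : (((b : ℤ) - (a : ℤ) + v c : ℤ) : ZMod e) = i := hres
      refine ⟨(c, a), ?_, ?_⟩
      · simp only [hAtop, hA, Finset.mem_filter]
        refine ⟨⟨hmemD (c, a) (show 1 ≤ mu.part c a by omega),
          show r ≤ mu.part c a by omega, ?_⟩, ?_⟩
        · show (((mu.part c a : ℤ) - ((a : ℤ) + 1) + v c : ℤ) : ZMod e) = i - 1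
          rw [show ((mu.part c a : ℤ) - ((a : ℤ) + 1) + v c : ℤ) =
            ((b : ℤ) - (a : ℤ) + v c) - 1 by omega]
          rw [Int.cast_sub, Int.cast_one, hres']
        · show a = 0 ∨ mu.part c a < mu.part c (a - 1)
          rcases hadd2 with h | h
          · exact Or.inl h
          · exact Or.inr (by omega)
      · show ((c, a).2, mu.part c a, c) = (a, b, c)
        rw [hadd1]
    · rintro ⟨p, hp, heq⟩
      obtain ⟨c2, a2⟩ := p
      simp only [Prod.mk.injEq] at heq
      obtain ⟨rfl, rfl, rfl⟩ := heq
      simp only [hAtop, hA, Finset.mem_filter] at hp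
      obtain ⟨⟨hd, hge, ht⟩, htop⟩ := hp
      have ht' : (((mu.part c2 a2 : ℤ) - ((a2 : ℤ) + 1) + v c2 : ℤ) : ZMod e) = i - 1 := ht
      refine ⟨⟨rfl, htop⟩, ?_, hge⟩
      show (((mu.part c2 a2 : ℤ) - (a2 : ℤ) + v c2 : ℤ) : ZMod e) = i
      rw [show ((mu.part c2 a2 : ℤ) - (a2 : ℤ) + v c2 : ℤ) =
        ((mu.part c2 a2 : ℤ) - ((a2 : ℤ) + 1) + v c2) + 1 by ring]
      rw [Int.cast_add, Int.cast_one, ht']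
      ring
  -- removable set = image of Rbot
  have hRemSet : {γ : ℕ × ℕ × Fin l | Removable mu γ ∧ res e v γ = i ∧ r ≤ γ.2.1 + 1} =
      ↑(Rbot.image fun p => (p.2, mu.part p.1 p.2 - 1, p.1)) := by
    ext γ
    obtain ⟨a, b, c⟩ := γ
    simp only [Set.mem_setOf_eq, Finset.coe_image, Set.mem_image, Finset.mem_coe]
    constructor
    · rintro ⟨⟨hrem1, hrem2⟩, hres, hrb⟩
      simp only at hrem1 hrem2 hrb
      have hres' : (((b : ℤ) - (a : ℤ) + v c : ℤ) : ZMod e) = i := hres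
      refine ⟨(c, a), ?_, ?_⟩
      · simp only [hRbot, hR, Finset.mem_filter]
        refine ⟨⟨hmemD (c, a) (show 1 ≤ mu.part c a by omega),
          show r ≤ mu.part c a by omega, ?_⟩,
          show mu.part c (a + 1) < mu.part c a by omega⟩
        show (((mu.part c a : ℤ) - ((a : ℤ) + 1) + v c : ℤ) : ZMod e) = i
        rw [show ((mu.part c a : ℤ) - ((a : ℤ) + 1) + v c : ℤ) =
          ((b : ℤ) - (a : ℤ) + v c) by omega]
        exact hres'
      · show ((c, a).2, mu.part c a - 1, c) = (a, b, c)
        rw [hrem1]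
        rfl
    · rintro ⟨p, hp, heq⟩
      obtain ⟨c2, a2⟩ := p
      simp only [Prod.mk.injEq] at heq
      obtain ⟨rfl, rfl, rfl⟩ := heq
      simp only [hRbot, hR, Finset.mem_filter] at hp
      obtain ⟨⟨hd, hge, ht⟩, hbot⟩ := hp
      have ht' : (((mu.part c2 a2 : ℤ) - ((a2 : ℤ) + 1) + v c2 : ℤ) : ZMod e) = i := ht
      have h1 : 1 ≤ mu.part c2 a2 := by omega
      refine ⟨⟨by show mu.part c2 a2 = mu.part c2 a2 - 1 + 1; omega,
        by show mu.part c2 (a2 + 1) ≤ mu.part c2 a2 - 1; omega⟩, ?_, by show r ≤ _ + 1; omega⟩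
      show ((((mu.part c2 a2 - 1 : ℕ) : ℤ) - (a2 : ℤ) + v c2 : ℤ) : ZMod e) = i
      rw [show (((mu.part c2 a2 - 1 : ℕ) : ℤ) - (a2 : ℤ) + v c2 : ℤ) =
        ((mu.part c2 a2 : ℤ) - ((a2 : ℤ) + 1) + v c2) by omega]
      exact ht'
  -- injectivity of images
  have hAddcard : Set.ncard {γ : ℕ × ℕ × Fin l |
      Addable mu γ ∧ res e v γ = i ∧ r ≤ γ.2.1} = Atop.card := by
    rw [hAddSet, Set.ncard_coe_finset]
    apply Finset.card_image_of_injOn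
    intro p _ q _ h
    simp only [Prod.mk.injEq] at h
    exact Prod.ext h.2.2 h.1
  have hRemcard : Set.ncard {γ : ℕ × ℕ × Fin l |
      Removable mu γ ∧ res e v γ = i ∧ r ≤ γ.2.1 + 1} = Rbot.card := by
    rw [hRemSet, Set.ncard_coe_finset]
    apply Finset.card_image_of_injOn
    intro p _ q _ h
    simp only [Prod.mk.injEq] at h
    exact Prod.ext h.2.2 h.1
  -- the cancelling bijection between non-top rows of A and non-bottom rows of R
  have hcancel :
      (A.filter (fun p => ¬(p.2 = 0 ∨ mu.part p.1 p.2 < mu.part p.1 (p.2 - 1)))).card =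
      (R.filter (fun p => ¬ mu.part p.1 (p.2 + 1) < mu.part p.1 p.2)).card := by
    apply Finset.card_bij' (fun p _ => (p.1, p.2 - 1)) (fun p _ => (p.1, p.2 + 1))
    · intro p hp
      simp only [hA, Finset.mem_filter] at hp
      obtain ⟨⟨hd, hge, ht⟩, hnt⟩ := hp
      push_neg at hnt
      have : p.2 - 1 + 1 = p.2 := by omega
      show ((p.1, p.2 - 1).1, (p.1, p.2 - 1).2 + 1) = p
      exact Prod.ext rfl this
    · intro p hp
      show ((p.1, p.2 + 1).1, (p.1, p.2 + 1).2 - 1) = p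
      exact Prod.ext rfl rfl
    · intro p hp
      simp only [hA, hR, Finset.mem_filter] at hp ⊢
      obtain ⟨⟨hd, hge, ht⟩, hnt⟩ := hp
      push_neg at hnt
      obtain ⟨ha0, hle⟩ := hnt
      have heq : mu.part p.1 (p.2 - 1) = mu.part p.1 p.2 := by
        have := mu.antitone p.1 (p.2 - 1) p.2 (by omega)
        omega
      have ht' : (((mu.part p.1 p.2 : ℤ) - ((p.2 : ℤ) + 1) + v p.1 : ℤ) : ZMod e)
          = i - 1 := ht
      refine ⟨⟨hmemD (p.1, p.2 - 1) (show 1 ≤ mu.part p.1 (p.2 - 1) by omega),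
        show r ≤ mu.part p.1 (p.2 - 1) by omega, ?_⟩,
        show mu.part p.1 (p.2 - 1 + 1) < mu.part p.1 (p.2 - 1) → _ from ?_⟩
      · show (((mu.part p.1 (p.2 - 1) : ℤ) - (((p.2 - 1 : ℕ) : ℤ) + 1) + v p.1 : ℤ) :
          ZMod e) = i
        rw [show ((mu.part p.1 (p.2 - 1) : ℤ) - (((p.2 - 1 : ℕ) : ℤ) + 1) + v p.1 : ℤ) =
          ((mu.part p.1 p.2 : ℤ) - ((p.2 : ℤ) + 1) + v p.1) + 1 by omega]
        rw [Int.cast_add, Int.cast_one, ht']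
        ring
      · intro hcon
        rw [show p.2 - 1 + 1 = p.2 by omega] at hcon
        omega
    · intro p hp
      simp only [hA, hR, Finset.mem_filter] at hp ⊢
      obtain ⟨⟨hd, hge, ht⟩, hnb⟩ := hp
      push_neg at hnb
      have heq : mu.part p.1 (p.2 + 1) = mu.part p.1 p.2 := by
        have := mu.antitone p.1 p.2 (p.2 + 1) (by omega)
        omega
      have ht' : (((mu.part p.1 p.2 : ℤ) - ((p.2 : ℤ) + 1) + v p.1 : ℤ) : ZMod e)
          = i := ht
      refine ⟨⟨hmemD (p.1, p.2 + 1) (show 1 ≤ mu.part p.1 (p.2 + 1) by omega),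
        show r ≤ mu.part p.1 (p.2 + 1) by omega, ?_⟩, ?_⟩
      · show (((mu.part p.1 (p.2 + 1) : ℤ) - (((p.2 + 1 : ℕ) : ℤ) + 1) + v p.1 : ℤ) :
          ZMod e) = i - 1
        rw [show ((mu.part p.1 (p.2 + 1) : ℤ) - (((p.2 + 1 : ℕ) : ℤ) + 1) + v p.1 : ℤ) =
          ((mu.part p.1 p.2 : ℤ) - ((p.2 : ℤ) + 1) + v p.1) - 1 by omega]
        rw [Int.cast_sub, Int.cast_one, ht']
      · push_neg
        refine ⟨by omega, ?_⟩
        show mu.part p.1 (p.2 + 1 - 1) ≤ mu.part p.1 (p.2 + 1)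
        rw [show p.2 + 1 - 1 = p.2 by omega]
        omega
  -- assemble
  have hAsplit := Finset.card_filter_add_card_filter_not
    (s := A) (p := fun p => p.2 = 0 ∨ mu.part p.1 p.2 < mu.part p.1 (p.2 - 1))
  have hRsplit := Finset.card_filter_add_card_filter_not
    (s := R) (p := fun p => mu.part p.1 (p.2 + 1) < mu.part p.1 p.2)
  rw [hsval, hAddcard, hRemcard]
  have h1 : A.card = Atop.card +
      (A.filter (fun p => ¬(p.2 = 0 ∨ mu.part p.1 p.2 < mu.part p.1 (p.2 - 1)))).card := by
    rw [hAtop]; omega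
  have h2 : R.card = Rbot.card +
      (R.filter (fun p => ¬ mu.part p.1 (p.2 + 1) < mu.part p.1 p.2)).card := by
    rw [hRbot]; omega
  rw [h1, h2, hcancel]
  push_cast
  ring
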